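/- arXiv:2404.05771 — 4 statements merged into one kernel-verified Lean document; each statement's English description precedes it below -/
import Mathlib

section
/- Let n be a positive integer that is an odd square, divisible by 5, with σ(n)/n = 9/5 (i.e., n is a friend of 10). If q₂ is the second smallest prime divisor of n and ω(n) is the number of distinct prime divisors of n, then q₂ < p_{⌈7ω(n)/3⌉}, where p_k denotes the k-th prime. -/
open Finset ArithmeticFunction
open scoped ArithmeticFunction.sigma

lemma ratio_anti {x y : ℕ} (hx : 2 ≤ x) (hxy : x ≤ y) :
    (y : ℚ) / ((y : ℚ) - 1) ≤ (x : ℚ) / ((x : ℚ) - 1) := by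
  have hx' : (2 : ℚ) ≤ x := by exact_mod_cast hx
  have hy' : (x : ℚ) ≤ y := by exact_mod_cast hxy
  rw [div_le_div_iff₀ (by linarith) (by linarith)]
  nlinarith

lemma prime_infinite : (setOf Nat.Prime).Infinite :=
  Set.infinite_of_forall_exists_gt fun a => by
    obtain ⟨p, hle, hp⟩ := Nat.exists_infinite_primes (a + 1)
    exact ⟨p, hp, by omega⟩

lemma nth_prime_lb : ∀ i : ℕ, 1 ≤ i → 2 * i + 1 ≤ Nat.nth Nat.Prime i := by
  intro i hi
  induction i, hi using Nat.le_induction with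
  | base => simp [Nat.nth_prime_one_eq_three]
  | succ i hi ih =>
    have h1 : Nat.nth Nat.Prime i < Nat.nth Nat.Prime (i + 1) :=
      (Nat.nth_lt_nth prime_infinite).2 (Nat.lt_succ_self i)
    have hp1 : (Nat.nth Nat.Prime (i+1)).Prime := Nat.nth_mem_of_infinite prime_infinite _
    have hp0 : (Nat.nth Nat.Prime i).Prime := Nat.nth_mem_of_infinite prime_infinite _
    have h2 : Nat.nth Nat.Prime (i+1) ≠ 2 := by
      intro h
      have := (Nat.nth_lt_nth prime_infinite (k := 0) (n := i+1)).2 (by omega)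
      rw [Nat.nth_prime_zero_eq_two, h] at this; omega
    have h3 : Nat.nth Nat.Prime i ≠ 2 := by
      intro h
      have := (Nat.nth_lt_nth prime_infinite (k := 0) (n := i)).2 (by omega)
      rw [Nat.nth_prime_zero_eq_two, h] at this; omega
    have o1 := hp1.odd_of_ne_two h2
    have o0 := hp0.odd_of_ne_two h3
    rw [Nat.odd_iff] at o1 o0
    omega

lemma fanti {c d : ℕ} (hc : 1 ≤ c) (hcd : c ≤ d) :
    (2 * (d : ℚ) + 1) / (2 * d) ≤ (2 * (c : ℚ) + 1) / (2 * c) := by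
  have := ratio_anti (x := 2 * c + 1) (y := 2 * d + 1) (by omega) (by omega)
  push_cast at this
  convert this using 2 <;> ring

lemma fpos {c : ℕ} (hc : 1 ≤ c) : 0 < (2 * (c : ℚ) + 1) / (2 * c) := by
  have : (1:ℚ) ≤ c := by exact_mod_cast hc
  positivity

lemma prodA : ∀ (m : ℕ) (C : Finset ℕ) (a : ℕ), 1 ≤ a → C.card = m → (∀ c ∈ C, a ≤ c) →
    (∏ c ∈ C, (2 * (c : ℚ) + 1) / (2 * c)) ≤
      ∏ i ∈ range m, (2 * ((a + i : ℕ) : ℚ) + 1) / (2 * (a + i : ℕ)) := by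
  intro m
  induction m with
  | zero => intro C a ha hC hmem; simp [Finset.card_eq_zero.mp hC]
  | succ m ih =>
    intro C a ha hC hmem
    have hne : C.Nonempty := Finset.card_pos.mp (by omega)
    set M := C.max' hne with hM
    have hMmem : M ∈ C := C.max'_mem hne
    have hsub : C ⊆ Finset.Icc a M := fun x hx =>
      Finset.mem_Icc.mpr ⟨hmem x hx, C.le_max' x hx⟩
    have hMge : a + m ≤ M := by
      have h := Finset.card_le_card hsub
      rw [Nat.card_Icc, hC] at h
      have := hmem M hMmem
      omega
    have herase : (C.erase M).card = m := by rw [Finset.card_erase_of_mem hMmem, hC]; omega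
    have h1 := ih (C.erase M) a ha herase (fun c hc => hmem c (Finset.mem_of_mem_erase hc))
    have h2 : (2 * (M : ℚ) + 1) / (2 * M) ≤ (2 * ((a + m : ℕ) : ℚ) + 1) / (2 * (a + m : ℕ)) :=
      fanti (c := a + m) (d := M) (by omega) hMge
    calc (∏ c ∈ C, (2 * (c : ℚ) + 1) / (2 * c))
        = (∏ c ∈ C.erase M, (2 * (c : ℚ) + 1) / (2 * c)) * ((2 * (M : ℚ) + 1) / (2 * M)) :=
          (Finset.prod_erase_mul C _ hMmem).symm
      _ ≤ (∏ i ∈ range m, (2 * ((a + i : ℕ) : ℚ) + 1) / (2 * (a + i : ℕ))) *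
            ((2 * ((a + m : ℕ) : ℚ) + 1) / (2 * (a + m : ℕ))) := by
          apply mul_le_mul h1 h2 (le_of_lt (fpos (by omega)))
          exact Finset.prod_nonneg fun i _ => le_of_lt (fpos (by omega))
      _ = _ := (Finset.prod_range_succ _ m).symm

lemma prodB : ∀ (m : ℕ) (a : ℕ), 1 ≤ a →
    (∏ i ∈ range m, (2 * ((a + i : ℕ) : ℚ) + 1) / (2 * (a + i : ℕ)))^2 ≤
      (2 * (a : ℚ) + 2 * m - 1) / (2 * a - 1) := by
  intro m
  induction m with
  | zero =>
    intro a ha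
    have : (1:ℚ) ≤ a := by exact_mod_cast ha
    simp only [range_zero, Finset.prod_empty, one_pow, Nat.cast_zero]
    rw [le_div_iff₀ (by linarith)]
    ring_nf
    linarith
  | succ m ih =>
    intro a ha
    have h := ih a ha
    have ha' : (1:ℚ) ≤ a := by exact_mod_cast ha
    have hm' : (0:ℚ) ≤ m := by positivity
    set x : ℚ := (a : ℚ) + m with hx
    have hx1 : 1 ≤ x := by rw [hx]; linarith
    have h2x : (0:ℚ) < 2 * x := by linarith
    have h2a : (0:ℚ) < 2 * (a:ℚ) - 1 := by linarith
    set Q : ℚ := ∏ i ∈ range m, (2 * ((a + i : ℕ) : ℚ) + 1) / (2 * (a + i : ℕ)) with hQ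
    have hfx : (2 * ((a + m : ℕ) : ℚ) + 1) / (2 * (a + m : ℕ)) = (2*x+1)/(2*x) := by
      push_cast; rw [hx]
    rw [Finset.prod_range_succ, hfx, ← hQ, mul_pow]
    have key : ((2*(a:ℚ)+2*m-1)/(2*(a:ℚ)-1)) * ((2*x+1)/(2*x))^2 ≤
        (2*(a:ℚ)+2*(m+1:ℕ)-1)/(2*(a:ℚ)-1) := by
      push_cast
      rw [div_pow, div_mul_div_comm, div_le_div_iff₀ (by positivity) h2a]
      nlinarith [mul_pos h2a (by linarith : (0:ℚ) < 2*x+1), sq_nonneg (2*x)]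
    calc Q^2 * ((2*x+1)/(2*x))^2
        ≤ ((2*(a:ℚ)+2*m-1)/(2*(a:ℚ)-1)) * ((2*x+1)/(2*x))^2 := by
          apply mul_le_mul_of_nonneg_right h (by positivity)
      _ ≤ _ := by push_cast at key ⊢; linarith

lemma abundancy_lt {n : ℕ} (hn : 0 < n) (hne : n.primeFactors.Nonempty) :
    (σ 1 n : ℚ) / n < ∏ p ∈ n.primeFactors, (p : ℚ) / ((p : ℚ) - 1) := by
  have hσ : (σ 1 n : ℚ) =
      ∏ p ∈ n.primeFactors, ∑ k ∈ range (n.factorization p + 1), (p : ℚ) ^ k := by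
    rw [sigma_one_apply, Nat.sum_divisors hn.ne']
    push_cast
    rfl
  have hN : (n : ℚ) = ∏ p ∈ n.primeFactors, (p : ℚ) ^ (n.factorization p) := by
    conv_lhs => rw [← Nat.factorization_prod_pow_eq_self hn.ne']
    rw [Nat.prod_factorization_eq_prod_primeFactors]
    push_cast
    rfl
  rw [hσ, hN, ← Finset.prod_div_distrib]
  apply Finset.prod_lt_prod_of_nonempty _ _ hne
  · intro p hp
    have hp2 : (2:ℚ) ≤ p := by exact_mod_cast (Nat.prime_of_mem_primeFactors hp).two_le
    apply div_pos
    · apply Finset.sum_pos (fun k _ => by positivity) (by simp)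
    · positivity
  · intro p hp
    have hp2 : (2:ℚ) ≤ p := by exact_mod_cast (Nat.prime_of_mem_primeFactors hp).two_le
    set e := n.factorization p
    have hPe : (0:ℚ) < (p:ℚ)^e := by positivity
    rw [div_lt_div_iff₀ hPe (by linarith)]
    rw [geom_sum_mul]
    have h1 : (p:ℚ) * (p:ℚ)^e = (p:ℚ)^(e+1) := by ring
    rw [h1]
    have : (0:ℚ) < (p:ℚ)^(e+1) := by positivity
    linarith

theorem second_prime_bound (n : ℕ) (hn : 0 < n) (hodd : Odd n) (hsq : IsSquare n)
    (h5 : 5 ∣ n) (habund : (σ 1 n : ℚ) / n = 9 / 5) (q₂ : ℕ)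
    (hq₂ : q₂ ∈ n.primeFactors) (hsecond : (n.primeFactors.filter (· < q₂)).card = 1) :
    q₂ < Nat.nth Nat.Prime ((⌈(7 * (n.primeFactors.card : ℚ)) / 3⌉).toNat - 1) := by
  by_contra hcon
  push_neg at hcon
  set S := n.primeFactors with hS
  set w := S.card with hw
  set K := (⌈(7 * (w : ℚ)) / 3⌉).toNat with hK
  -- q₁
  obtain ⟨q₁, hq₁eq⟩ := Finset.card_eq_one.mp hsecond
  have hq₁f : q₁ ∈ S.filter (· < q₂) := hq₁eq ▸ Finset.mem_singleton_self q₁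
  have hq₁S : q₁ ∈ S := Finset.mem_of_mem_filter q₁ hq₁f
  have hq₁lt : q₁ < q₂ := by simpa using (Finset.mem_filter.mp hq₁f).2
  have hq₁p : q₁.Prime := Nat.prime_of_mem_primeFactors hq₁S
  have hq₂p : q₂.Prime := Nat.prime_of_mem_primeFactors hq₂
  -- n odd so no prime factor is 2
  have hodd' : ∀ p ∈ S, p ≠ 2 := by
    intro p hp h2
    have hdvd : p ∣ n := Nat.dvd_of_mem_primeFactors hp
    rw [h2] at hdvd
    rw [Nat.odd_iff] at hodd
    omega
  have hq₁3 : 3 ≤ q₁ := by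
    have := hq₁p.two_le; have := hodd' q₁ hq₁S; omega
  -- w ≥ 2
  have hw2 : 2 ≤ w := Finset.one_lt_card.mpr ⟨q₁, hq₁S, q₂, hq₂, by omega⟩
  -- K bounds
  have h3K : 7 * w ≤ 3 * K := by
    have hceil : (7 * (w:ℚ)) / 3 ≤ (⌈(7 * (w:ℚ)) / 3⌉ : ℚ) := Int.le_ceil _
    have hpos : (0:ℤ) ≤ ⌈(7 * (w:ℚ)) / 3⌉ := Int.ceil_nonneg (by positivity)
    have hKQ : ((K : ℕ) : ℚ) = (⌈(7 * (w:ℚ)) / 3⌉ : ℚ) := by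
      rw [hK]; exact_mod_cast congrArg Int.cast (Int.toNat_of_nonneg hpos)
    have : (7 * (w:ℚ)) ≤ 3 * K := by rw [hKQ]; linarith
    exact_mod_cast this
  have hK5 : 5 ≤ K := by omega
  set a := K - 1 with ha
  have ha4 : 4 ≤ a := by omega
  -- count bound
  have hcnt : a ≤ Nat.count Nat.Prime q₂ := by
    have h1 := Nat.count_monotone Nat.Prime hcon
    rwa [Nat.count_nth_of_infinite prime_infinite a] at h1
  -- T
  set T := S.filter (fun p => ¬ p < q₂) with hT
  have hTcard : T.card = w - 1 := by
    have := Finset.card_filter_add_card_filter_not (s := S) (p := (· < q₂))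
    rw [hsecond] at this
    simp only [hT]
    omega
  have hTmem : ∀ p ∈ T, q₂ ≤ p ∧ p.Prime := by
    intro p hp
    rw [hT, Finset.mem_filter] at hp
    exact ⟨by omega, Nat.prime_of_mem_primeFactors hp.1⟩
  -- step 1
  have step1 : (9:ℚ)/5 < ∏ p ∈ S, (p : ℚ) / ((p : ℚ) - 1) := by
    rw [← habund]; exact abundancy_lt hn ⟨q₂, hq₂⟩
  -- split product
  have hsplit : ∏ p ∈ S, (p : ℚ) / ((p : ℚ) - 1) =
      ((q₁ : ℚ) / ((q₁ : ℚ) - 1)) * ∏ p ∈ T, (p : ℚ) / ((p : ℚ) - 1) := by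
    rw [← Finset.prod_filter_mul_prod_filter_not S (· < q₂), hq₁eq, Finset.prod_singleton]
  have hq₁le : (q₁ : ℚ) / ((q₁ : ℚ) - 1) ≤ 3/2 := by
    have := ratio_anti (x := 3) (y := q₁) (by norm_num) hq₁3
    norm_num at this
    linarith
  -- bound each p ∈ T by f(count p)
  have hTbound : ∀ p ∈ T, (p : ℚ) / ((p : ℚ) - 1) ≤
      (2 * ((Nat.count Nat.Prime p : ℕ) : ℚ) + 1) / (2 * (Nat.count Nat.Prime p : ℕ)) := by
    intro p hp
    obtain ⟨hq₂le, hpp⟩ := hTmem p hp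
    have hc : a ≤ Nat.count Nat.Prime p :=
      le_trans hcnt (Nat.count_monotone Nat.Prime hq₂le)
    have hnth : Nat.nth Nat.Prime (Nat.count Nat.Prime p) = p := Nat.nth_count hpp
    have hlb : 2 * Nat.count Nat.Prime p + 1 ≤ p := by
      have h := nth_prime_lb (Nat.count Nat.Prime p) (by omega)
      rwa [hnth] at h
    have := ratio_anti (x := 2 * Nat.count Nat.Prime p + 1) (y := p) (by omega) hlb
    push_cast at this ⊢
    convert this using 2 <;> ring
  have hTnonneg : ∀ p ∈ T, (0:ℚ) ≤ (p : ℚ) / ((p : ℚ) - 1) := by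
    intro p hp
    obtain ⟨_, hpp⟩ := hTmem p hp
    have h2p : (2:ℚ) ≤ p := by exact_mod_cast hpp.two_le
    have h1p : (0:ℚ) < (p:ℚ) - 1 := by linarith
    positivity
  have h2 : ∏ p ∈ T, (p : ℚ) / ((p : ℚ) - 1) ≤
      ∏ p ∈ T, (2 * ((Nat.count Nat.Prime p : ℕ) : ℚ) + 1) / (2 * (Nat.count Nat.Prime p : ℕ)) :=
    Finset.prod_le_prod hTnonneg hTbound
  -- image
  set C := T.image (Nat.count Nat.Prime) with hC
  have hinj : Set.InjOn (Nat.count Nat.Prime) T := by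
    intro p hp q hq h
    by_contra hne
    rcases Nat.lt_or_ge p q with hlt | hge
    · have := Nat.count_strict_mono ((hTmem p (by exact_mod_cast hp)).2) hlt; omega
    · have hlt : q < p := by omega
      have := Nat.count_strict_mono ((hTmem q (by exact_mod_cast hq)).2) hlt; omega
  have h3 : ∏ p ∈ T, (2 * ((Nat.count Nat.Prime p : ℕ) : ℚ) + 1) / (2 * (Nat.count Nat.Prime p : ℕ))
      = ∏ c ∈ C, (2 * (c : ℚ) + 1) / (2 * c) :=
      (Finset.prod_image (f := fun c : ℕ => (2 * (c : ℚ) + 1) / (2 * c)) hinj).symm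
  have hCcard : C.card = w - 1 := by rw [hC, Finset.card_image_of_injOn hinj, hTcard]
  have hCmem : ∀ c ∈ C, a ≤ c := by
    intro c hc
    obtain ⟨p, hp, rfl⟩ := Finset.mem_image.mp hc
    exact le_trans hcnt (Nat.count_monotone Nat.Prime (hTmem p hp).1)
  have h4 := prodA (w - 1) C a (by omega) hCcard hCmem
  set A := ∏ i ∈ range (w - 1), (2 * ((a + i : ℕ) : ℚ) + 1) / (2 * (a + i : ℕ)) with hA
  have h5' := prodB (w - 1) a (by omega)
  have hApos : 0 < A := Finset.prod_pos fun i _ => fpos (by omega)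
  -- chain: 9/5 < (3/2) * A
  have hchain : (9:ℚ)/5 < 3/2 * A := by
    have hTle : ∏ p ∈ T, (p : ℚ) / ((p : ℚ) - 1) ≤ A := le_trans h2 (h3 ▸ h4)
    have hTnn : (0:ℚ) ≤ ∏ p ∈ T, (p : ℚ) / ((p : ℚ) - 1) := Finset.prod_nonneg hTnonneg
    have := mul_le_mul hq₁le hTle hTnn (by norm_num)
    rw [hsplit] at step1
    linarith
  have hA65 : (6:ℚ)/5 < A := by linarith
  have hAsq : (36:ℚ)/25 < A^2 := by nlinarith
  -- arithmetic bound
  have harith : 50 * (w - 1) + 11 ≤ 22 * a := by omega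
  have hfin : (2 * (a : ℚ) + 2 * (w - 1 : ℕ) - 1) / (2 * a - 1) ≤ 36/25 := by
    have ha' : (4:ℚ) ≤ a := by exact_mod_cast ha4
    have harith' : 50 * ((w - 1 : ℕ) : ℚ) + 11 ≤ 22 * a := by exact_mod_cast harith
    rw [div_le_div_iff₀ (by linarith) (by norm_num)]
    linarith
  linarith
end

section
/- Let n be a positive integer that is an odd square, divisible by 5, with σ(n)/n = 9/5. If q₂ is the second smallest prime divisor of n, then 7 ≤ q₂ < ⌈7ω(n)/3⌉·(log(⌈7ω(n)/3⌉) + 2·log log(⌈7ω(n)/3⌉)). -/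
open ArithmeticFunction Finset
open scoped ArithmeticFunction.sigma

lemma sigma_div_mono {m n : ℕ} (hmn : m ∣ n) (hn : 0 < n) :
    σ 1 m * n ≤ σ 1 n * m := by
  obtain ⟨k, rfl⟩ := hmn
  have hm : 0 < m := Nat.pos_of_ne_zero fun h => by simp [h] at hn
  have hk : 0 < k := Nat.pos_of_ne_zero fun h => by simp [h] at hn
  rw [sigma_one_apply, sigma_one_apply]
  have himg : (m.divisors.image (· * k)) ⊆ (m * k).divisors := by
    intro e he
    simp only [mem_image] at he
    obtain ⟨d, hd, rfl⟩ := he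
    rw [Nat.mem_divisors] at hd ⊢
    exact ⟨mul_dvd_mul hd.1 dvd_rfl, by positivity⟩
  have hsum : ∑ d ∈ m.divisors, d * k ≤ ∑ d ∈ (m * k).divisors, d := by
    have hi := Finset.sum_image (s := m.divisors) (g := (· * k)) (f := fun x => x)
      (fun a _ b _ h => Nat.eq_of_mul_eq_mul_right hk h)
    simp only at hi
    rw [← hi]
    exact Finset.sum_le_sum_of_subset himg
  calc (∑ d ∈ m.divisors, d) * (m * k) = (∑ d ∈ m.divisors, d * k) * m := by
        rw [Finset.sum_mul, Finset.sum_mul]; apply Finset.sum_congr rfl; intros; ring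
    _ ≤ (∑ d ∈ (m*k).divisors, d) * m := Nat.mul_le_mul_right m hsum

lemma no_three {n : ℕ} (hn : 0 < n) (hsq : IsSquare n) (h5 : 5 ∣ n)
    (heq : 5 * σ 1 n = 9 * n) : ¬ 3 ∣ n := by
  have key : ∀ d, d ∣ n → 5 * σ 1 d ≤ 9 * d := by
    intro d hd
    have h1 := sigma_div_mono hd hn
    have h2 : 5 * σ 1 d * n ≤ 5 * (σ 1 n * d) := by
      calc 5 * σ 1 d * n = 5 * (σ 1 d * n) := by ring
        _ ≤ 5 * (σ 1 n * d) := Nat.mul_le_mul_left 5 h1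
    have h3 : 5 * (σ 1 n * d) = 9 * d * n := by
      calc 5 * (σ 1 n * d) = (5 * σ 1 n) * d := by ring
        _ = 9 * n * d := by rw [heq]
        _ = 9 * d * n := by ring
    exact Nat.le_of_mul_le_mul_right (h3 ▸ h2) hn
  have hev : ∀ p, Even (n.factorization p) := by
    obtain ⟨r, hr⟩ := hsq
    have hr0 : r ≠ 0 := by rintro rfl; simp at hr; omega
    intro p
    exact ⟨r.factorization p, by rw [hr, Nat.factorization_mul hr0 hr0]; simp⟩
  have hsqdvd : ∀ p, p.Prime → p ∣ n → p ^ 2 ∣ n := by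
    intro p pp hp
    rw [Nat.Prime.pow_dvd_iff_le_factorization pp hn.ne']
    have h1 : 1 ≤ n.factorization p := by
      rw [← Nat.Prime.dvd_iff_one_le_factorization pp hn.ne']; exact hp
    obtain ⟨r, hrr⟩ := hev p; omega
  intro h3
  have h9 : 9 ∣ n := by simpa using hsqdvd 3 (by norm_num) h3
  have h25 : 25 ∣ n := by simpa using hsqdvd 5 (by norm_num) h5
  obtain ⟨r, hrr⟩ := hev 3
  have h1 : 1 ≤ n.factorization 3 := by
    rw [← Nat.Prime.dvd_iff_one_le_factorization (by norm_num) hn.ne']; exact h3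
  rcases (by omega : n.factorization 3 = 2 ∨ 4 ≤ n.factorization 3) with he | he
  · obtain ⟨m, hm⟩ : 9 ∣ n := Dvd.dvd.trans dvd_rfl h9
    have h3m : ¬ 3 ∣ m := by
      intro hc
      have : 3 ^ 3 ∣ n := by
        obtain ⟨t, ht⟩ := hc
        exact ⟨t, by rw [hm, ht]; ring⟩
      rw [Nat.Prime.pow_dvd_iff_le_factorization (by norm_num) hn.ne'] at this
      omega
    have hcop : Nat.Coprime 9 m := by
      have : Nat.Coprime 3 m := (Nat.Prime.coprime_iff_not_dvd (by norm_num)).mpr h3m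
      exact Nat.Coprime.pow_left 2 this
    have hsig : σ 1 n = 13 * σ 1 m := by
      rw [hm, isMultiplicative_sigma.map_mul_of_coprime hcop]
      norm_num [show σ 1 9 = 13 by rw [sigma_one_apply]; decide]
    have h13 : (13 : ℕ) ∣ n := by
      have hd : (13 : ℕ) ∣ 9 * n := by
        rw [← heq, hsig]; exact ⟨5 * σ 1 m, by ring⟩
      exact (Nat.Coprime.dvd_of_dvd_mul_left (by norm_num) hd)
    have h169 : 169 ∣ n := by simpa using hsqdvd 13 (by norm_num) h13
    have h225 : 225 ∣ n := by
      have := Nat.Coprime.mul_dvd_of_dvd_of_dvd (by norm_num : Nat.Coprime 9 25) h9 h25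
      simpa using this
    have h38025 : 38025 ∣ n := by
      have := Nat.Coprime.mul_dvd_of_dvd_of_dvd
        (by norm_num : Nat.Coprime 225 169) h225 h169
      simpa using this
    have hk := key 38025 h38025
    have hs : σ 1 38025 = 73749 := by
      rw [show (38025 : ℕ) = 225 * 169 by norm_num,
        isMultiplicative_sigma.map_mul_of_coprime (by norm_num : Nat.Coprime 225 169),
        show (225 : ℕ) = 9 * 25 by norm_num,
        isMultiplicative_sigma.map_mul_of_coprime (by norm_num : Nat.Coprime 9 25)]
      rw [show σ 1 9 = 13 by rw [sigma_one_apply]; decide,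
        show σ 1 25 = 31 by rw [sigma_one_apply]; decide,
        show σ 1 169 = 183 by rw [sigma_one_apply]; decide]
      norm_num
    rw [hs] at hk; omega
  · have h81 : 81 ∣ n := by
      have : 3 ^ 4 ∣ n := by
        rw [Nat.Prime.pow_dvd_iff_le_factorization (by norm_num) hn.ne']; omega
      simpa using this
    have h2025 : 2025 ∣ n := by
      have := Nat.Coprime.mul_dvd_of_dvd_of_dvd (by norm_num : Nat.Coprime 81 25) h81 h25
      simpa using this
    have hk := key 2025 h2025
    have hs : σ 1 2025 = 3751 := by
      rw [show (2025 : ℕ) = 81 * 25 by norm_num,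
        isMultiplicative_sigma.map_mul_of_coprime (by norm_num : Nat.Coprime 81 25),
        show σ 1 81 = 121 by rw [sigma_one_apply]; decide,
        show σ 1 25 = 31 by rw [sigma_one_apply]; decide]
      norm_num
    rw [hs] at hk; omega

set_option maxHeartbeats 1000000 in
theorem second_prime_explicit_bound (n : ℕ) (hn : 0 < n) (hodd : Odd n)
    (hsq : IsSquare n) (h5 : 5 ∣ n) (habund : (σ 1 n : ℚ) / n = 9 / 5) (q₂ : ℕ)
    (hq₂ : q₂ ∈ n.primeFactors) (hsecond : (n.primeFactors.filter (· < q₂)).card = 1) :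
    7 ≤ q₂ ∧
      (q₂ : ℝ) < ((⌈(7 * (n.primeFactors.card : ℚ)) / 3⌉ : ℤ) : ℝ) *
        (Real.log ((⌈(7 * (n.primeFactors.card : ℚ)) / 3⌉ : ℤ) : ℝ) +
          2 * Real.log (Real.log ((⌈(7 * (n.primeFactors.card : ℚ)) / 3⌉ : ℤ) : ℝ))) := by
  have hn0 : (n : ℚ) ≠ 0 := Nat.cast_ne_zero.mpr hn.ne'
  have heqQ : (σ 1 n : ℚ) * 5 = 9 * n := by
    rw [div_eq_div_iff hn0 (by norm_num)] at habund; linarith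
  have heq : 5 * σ 1 n = 9 * n := by
    have h : ((5 * σ 1 n : ℕ) : ℚ) = ((9 * n : ℕ) : ℚ) := by push_cast; linarith
    exact_mod_cast h
  have h3n : ¬ 3 ∣ n := no_three hn hsq h5 heq
  have hmod2 : n % 2 = 1 := Nat.odd_iff.mp hodd
  obtain ⟨hq2p, hq2d, -⟩ := Nat.mem_primeFactors.mp hq₂
  -- q₂ is at least 7
  have h7 : 7 ≤ q₂ := by
    by_contra hlt
    push_neg at hlt
    have h2le := hq2p.two_le
    have hq2ne2 : q₂ ≠ 2 := by
      rintro rfl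
      obtain ⟨t, ht⟩ := hq2d
      omega
    have hq2ne3 : q₂ ≠ 3 := by rintro rfl; exact h3n hq2d
    have hq2ne5 : q₂ ≠ 5 := by
      rintro rfl
      obtain ⟨a, ha⟩ := Finset.card_eq_one.mp hsecond
      have haf : a ∈ n.primeFactors.filter (· < 5) := ha ▸ Finset.mem_singleton_self a
      rw [Finset.mem_filter] at haf
      obtain ⟨haS, halt⟩ := haf
      obtain ⟨hap, had, -⟩ := Nat.mem_primeFactors.mp haS
      have h2a := hap.two_le
      interval_cases a
      · obtain ⟨t, ht⟩ := had; omega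
      · exact h3n had
      · exact absurd hap (by norm_num)
    interval_cases q₂
    · exact hq2ne2 rfl
    · exact hq2ne3 rfl
    · exact absurd hq2p (by norm_num)
    · exact hq2ne5 rfl
    · exact absurd hq2p (by norm_num)
  -- the unique prime below q₂ is 5
  have h5S : 5 ∈ n.primeFactors := Nat.mem_primeFactors.mpr ⟨by norm_num, h5, hn.ne'⟩
  have hfilter : n.primeFactors.filter (· < q₂) = {5} := by
    obtain ⟨a, ha⟩ := Finset.card_eq_one.mp hsecond
    have h5f : (5 : ℕ) ∈ n.primeFactors.filter (· < q₂) :=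
      Finset.mem_filter.mpr ⟨h5S, show (5:ℕ) < q₂ by omega⟩
    rw [ha] at h5f ⊢
    rw [Finset.mem_singleton] at h5f
    rw [h5f]
  have hge : ∀ p ∈ n.primeFactors.erase 5, q₂ ≤ p := by
    intro p hp
    obtain ⟨hne, hpS⟩ := Finset.mem_erase.mp hp
    by_contra hcon
    push_neg at hcon
    have : p ∈ n.primeFactors.filter (· < q₂) :=
      Finset.mem_filter.mpr ⟨hpS, show p < q₂ by omega⟩
    rw [hfilter, Finset.mem_singleton] at this
    exact hne this
  set W := n.primeFactors.card with hW
  have hW2 : 2 ≤ W := Finset.one_lt_card.mpr ⟨5, h5S, q₂, hq₂, by omega⟩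
  -- abundancy < product of p/(p-1)
  have hlt : (9 : ℚ) / 5 < ∏ p ∈ n.primeFactors, (p : ℚ) / ((p : ℚ) - 1) := by
    rw [← habund]
    have h1 : σ 1 n = ∏ p ∈ n.primeFactors, σ 1 (p ^ n.factorization p) := by
      rw [isMultiplicative_sigma.multiplicative_factorization _ hn.ne']
      rw [Finsupp.prod, Nat.support_factorization]
    have h2 : (n : ℚ) = ∏ p ∈ n.primeFactors, ((p : ℚ) ^ n.factorization p) := by
      conv_lhs => rw [← Nat.factorization_prod_pow_eq_self hn.ne']
      rw [Finsupp.prod, Nat.support_factorization]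
      push_cast
      rfl
    rw [h1, h2]
    push_cast
    rw [← Finset.prod_div_distrib]
    apply Finset.prod_lt_prod_of_nonempty
    · intro p hp
      have hpp := Nat.prime_of_mem_primeFactors hp
      have hp0 : (0:ℚ) < (p:ℚ) := by exact_mod_cast hpp.pos
      have : (0:ℚ) < (p:ℚ) ^ n.factorization p := pow_pos hp0 _
      apply div_pos _ this
      have : 0 < σ 1 (p ^ n.factorization p) := by
        apply Nat.pos_of_ne_zero
        intro hc
        rw [sigma_one_apply] at hc
        have : 1 ∈ (p ^ n.factorization p).divisors := by
          rw [Nat.mem_divisors]; exact ⟨one_dvd _, (pow_pos hpp.pos _).ne'⟩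
        have := Finset.sum_eq_zero_iff.mp hc 1 this
        omega
      exact_mod_cast this
    · intro p hp
      have hpp := Nat.prime_of_mem_primeFactors hp
      have hp1 : (1:ℚ) < p := by exact_mod_cast hpp.one_lt
      rw [sigma_one_apply_prime_pow hpp]
      push_cast
      rw [div_lt_div_iff₀ (pow_pos (by linarith) _) (by linarith)]
      rw [geom_sum_mul]
      calc (p:ℚ) ^ (n.factorization p + 1) - 1 < (p:ℚ) ^ (n.factorization p + 1) := by
            linarith
        _ = (p:ℚ) * (p:ℚ) ^ n.factorization p := by ring
    · exact ⟨5, h5S⟩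
  -- peel off the factor at 5 and bound the rest
  have hq2Q : (7:ℚ) ≤ (q₂ : ℚ) := by exact_mod_cast h7
  have hsplit : ∏ p ∈ n.primeFactors, (p : ℚ) / ((p : ℚ) - 1)
      = (5/4) * ∏ p ∈ n.primeFactors.erase 5, (p : ℚ) / ((p : ℚ) - 1) := by
    rw [← Finset.mul_prod_erase _ _ h5S]
    norm_num
  have hbound : ∏ p ∈ n.primeFactors.erase 5, (p : ℚ) / ((p : ℚ) - 1)
      ≤ ((q₂ : ℚ) / ((q₂ : ℚ) - 1)) ^ (W - 1) := by
    have hcard : (n.primeFactors.erase 5).card = W - 1 := Finset.card_erase_of_mem h5S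
    rw [← hcard, ← Finset.prod_const]
    apply Finset.prod_le_prod
    · intro p hp
      have hqp := hge p hp
      have hqpQ : (q₂ : ℚ) ≤ (p : ℚ) := by exact_mod_cast hqp
      exact div_nonneg (by linarith) (by linarith)
    · intro p hp
      have hqp := hge p hp
      have hqpQ : (q₂ : ℚ) ≤ (p : ℚ) := by exact_mod_cast hqp
      rw [div_le_div_iff₀ (by linarith) (by linarith)]
      nlinarith
  have hrpow : (36 : ℚ) / 25 < ((q₂ : ℚ) / ((q₂ : ℚ) - 1)) ^ (W - 1) := by
    rw [hsplit] at hlt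
    linarith
  -- invert and apply Bernoulli
  have hr1 : (1:ℚ) < (q₂ : ℚ) / ((q₂ : ℚ) - 1) := by
    rw [lt_div_iff₀ (by linarith)]; linarith
  have hinv : (((q₂ : ℚ) - 1) / (q₂ : ℚ)) ^ (W - 1) < 25 / 36 := by
    have h1 : (((q₂:ℚ) - 1) / (q₂:ℚ)) ^ (W-1) = (((q₂:ℚ) / ((q₂:ℚ) - 1)) ^ (W-1))⁻¹ := by
      rw [← inv_pow, inv_div]
    rw [h1]
    have h2 := inv_strictAnti₀ (by norm_num : (0:ℚ) < 36/25) hrpow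
    simpa using h2
  have hber : 1 + ((W - 1 : ℕ) : ℚ) * (-(1/(q₂:ℚ))) ≤ (1 + (-(1/(q₂:ℚ)))) ^ (W - 1) := by
    apply one_add_mul_le_pow
    have : (0:ℚ) < 1/(q₂:ℚ) := by positivity
    have : (1:ℚ)/(q₂:ℚ) ≤ 1 := by
      rw [div_le_one (by linarith)]; linarith
    linarith
  have hident : (1 + (-(1/(q₂:ℚ)))) = ((q₂:ℚ) - 1)/(q₂:ℚ) := by
    field_simp
    ring
  have hq11 : 11 * q₂ < 36 * (W - 1) := by
    rw [hident] at hber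
    have h2 := lt_of_le_of_lt hber hinv
    have hq0 : (0:ℚ) < (q₂:ℚ) := by linarith
    have h3 : (11:ℚ)/36 < ((W - 1 : ℕ) : ℚ) * (1/(q₂:ℚ)) := by linarith
    have h4 : (11:ℚ) * q₂ < 36 * ((W - 1 : ℕ) : ℚ) := by
      rw [mul_one_div] at h3
      rw [lt_div_iff₀ hq0] at h3
      linarith
    exact_mod_cast h4
  -- final numeric estimates over the reals
  refine ⟨h7, ?_⟩
  set c : ℤ := ⌈(7 * (W : ℚ)) / 3⌉ with hc
  have hc1 : (7 * (W : ℚ)) / 3 ≤ (c : ℚ) := Int.le_ceil _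
  have hWQ : (2:ℚ) ≤ (W:ℚ) := by exact_mod_cast hW2
  have hc5 : (5 : ℤ) ≤ c := by
    have h4 : (4:ℚ) < (c:ℚ) := by linarith
    have : (4:ℤ) < c := by exact_mod_cast h4
    omega
  have hC5 : (5 : ℝ) ≤ (c : ℝ) := by exact_mod_cast hc5
  have hexp3 : Real.exp 3 < 25 := by
    have h1 : Real.exp 1 < 2.7182818286 := Real.exp_one_lt_d9
    have h2 : Real.exp 3 = (Real.exp 1) ^ 3 := by
      rw [← Real.exp_nat_mul]; norm_num
    rw [h2]
    calc (Real.exp 1) ^ 3 < 2.7182818286 ^ 3 :=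
          pow_lt_pow_left₀ h1 (Real.exp_pos 1).le (by norm_num)
      _ < 25 := by norm_num
  have hexp32 : Real.exp (3/2) < 5 := by
    have h1 : Real.exp (3/2) * Real.exp (3/2) = Real.exp 3 := by
      rw [← Real.exp_add]; norm_num
    nlinarith [Real.exp_pos (3/2)]
  have hlog5 : (3:ℝ)/2 < Real.log 5 := by
    rw [Real.lt_log_iff_exp_lt (by norm_num : (0:ℝ) < 5)]
    exact hexp32
  have hlogC : (3:ℝ)/2 < Real.log (c : ℝ) :=
    lt_of_lt_of_le hlog5 (Real.log_le_log (by norm_num) hC5)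
  have hloglog : 0 ≤ Real.log (Real.log (c : ℝ)) :=
    Real.log_nonneg (by linarith)
  have hCq : (7 * (W : ℝ)) / 3 ≤ (c : ℝ) := by
    have h3 := (Rat.cast_le (K := ℝ)).mpr hc1
    push_cast at h3
    exact h3
  have hqR : 11 * (q₂ : ℝ) < 36 * ((W : ℝ) - 1) := by
    have : ((11 * q₂ : ℕ) : ℝ) < ((36 * (W - 1) : ℕ) : ℝ) := by exact_mod_cast hq11
    push_cast at this
    have hW1 : (1:ℝ) ≤ ((W:ℕ):ℝ) := by exact_mod_cast (by omega : 1 ≤ W)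
    rw [Nat.cast_sub (by omega : 1 ≤ W)] at this
    push_cast at this
    linarith
  have hC0 : (0:ℝ) ≤ (c : ℝ) := by linarith
  have hstep : (c : ℝ) * (3/2) ≤ (c : ℝ) *
      (Real.log (c : ℝ) + 2 * Real.log (Real.log (c : ℝ))) :=
    mul_le_mul_of_nonneg_left (by linarith) hC0
  have hWR : (2:ℝ) ≤ (W:ℝ) := by exact_mod_cast hW2
  calc (q₂ : ℝ) < (36 * ((W : ℝ) - 1)) / 11 := by linarith
    _ ≤ (c : ℝ) * (3/2) := by nlinarith
    _ ≤ _ := hstep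
end

section
/- Let n be a positive integer that is an odd square, divisible by 5, with σ(n)/n = 9/5. If q₃ is the third smallest prime divisor of n, then q₃ < p_{⌈180ω(n)/41⌉}, where p_k is the k-th prime. -/
open ArithmeticFunction Finset
open scoped ArithmeticFunction.sigma


lemma sigma_mono {d N : ℕ} (hN : 0 < N) (hdN : d ∣ N) :
    σ 1 d * N ≤ σ 1 N * d := by
  have hsub : d.divisors ⊆ N.divisors := Nat.divisors_subset_of_dvd hN.ne' hdN
  have h1 : σ 1 N = ∑ e ∈ N.divisors, N / e := by
    rw [sigma_one_apply]; exact (Nat.sum_div_divisors N _root_.id).symm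
  have h2 : σ 1 d = ∑ e ∈ d.divisors, d / e := by
    rw [sigma_one_apply]; exact (Nat.sum_div_divisors d _root_.id).symm
  calc σ 1 d * N = ∑ e ∈ d.divisors, (N / e) * d := by
        rw [h2, Finset.sum_mul]
        refine Finset.sum_congr rfl fun e he => ?_
        have hed : e ∣ d := Nat.dvd_of_mem_divisors he
        have heN : e ∣ N := hed.trans hdN
        obtain ⟨f, hf⟩ := hed
        have he0 : 0 < e := Nat.pos_of_mem_divisors he
        subst hf
        rw [Nat.mul_div_cancel_left _ he0, ← mul_assoc, Nat.div_mul_cancel heN, mul_comm]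
    _ ≤ ∑ e ∈ N.divisors, (N / e) * d := Finset.sum_le_sum_of_subset hsub
    _ = σ 1 N * d := by rw [h1, Finset.sum_mul]

lemma s2025 : σ 1 2025 = 3751 := by
  rw [show (2025:ℕ) = 3^4 * 5^2 by norm_num,
    isMultiplicative_sigma.map_mul_of_coprime (by norm_num),
    sigma_one_apply_prime_pow Nat.prime_three, sigma_one_apply_prime_pow (by norm_num)]
  simp [Finset.sum_range_succ]

lemma s5625 : σ 1 5625 = 10153 := by
  rw [show (5625:ℕ) = 3^2 * 5^4 by norm_num,
    isMultiplicative_sigma.map_mul_of_coprime (by norm_num),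
    sigma_one_apply_prime_pow Nat.prime_three, sigma_one_apply_prime_pow (by norm_num)]
  simp [Finset.sum_range_succ]

lemma s225 : σ 1 225 = 403 := by
  rw [show (225:ℕ) = 3^2 * 5^2 by norm_num,
    isMultiplicative_sigma.map_mul_of_coprime (by norm_num),
    sigma_one_apply_prime_pow Nat.prime_three, sigma_one_apply_prime_pow (by norm_num)]
  simp [Finset.sum_range_succ]

lemma s169 : σ 1 169 = 183 := by
  rw [show (169:ℕ) = 13^2 by norm_num, sigma_one_apply_prime_pow (by norm_num)]
  simp [Finset.sum_range_succ]


private lemma arith_evp {x : ℕ} (h1 : 1 ≤ x) (h2 : x % 2 = 0) : 2 ≤ x := by omega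
private lemma arith_evp4 {x : ℕ} (h1 : 3 ≤ x) (h2 : x % 2 = 0) : 4 ≤ x := by omega
private lemma arith_c1 {n s : ℕ} (hn : 0 < n) (hle : 3751 * n ≤ s * 2025) (hsig : 5 * s = 9 * n) : False := by omega
private lemma arith_c2 {n s : ℕ} (hn : 0 < n) (hle : 10153 * n ≤ s * 5625) (hsig : 5 * s = 9 * n) : False := by omega
private lemma arith_key {s m : ℕ} (h : 5 * (403 * s) = 9 * (225 * m)) : 403 * s = 405 * m := by omega
private lemma arith_e13 {a b : ℕ} (h : a % 2 = 0) (heq : a = 0 + b) (h1 : 1 ≤ b) : 2 ≤ b := by omega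
private lemma arith_c3 {m s : ℕ} (hm : 0 < m) (hle : 183 * m ≤ s * 169) (hk : 403 * s = 405 * m) : False := by omega

lemma not_three_dvd {n : ℕ} (hn : 0 < n) (hsq : IsSquare n)
    (h5 : 5 ∣ n) (hsig : 5 * σ 1 n = 9 * n) : ¬ 3 ∣ n := by
  intro h3
  obtain ⟨r, hr⟩ := hsq
  have hn0 : n ≠ 0 := hn.ne'
  have hr0 : r ≠ 0 := by rintro rfl; simp at hr; omega
  have heven : ∀ p, n.factorization p % 2 = 0 := by
    intro p
    rw [hr, Nat.factorization_mul hr0 hr0]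
    simp [Finsupp.add_apply, Nat.mul_mod_right]
    omega
  have ha1 : 1 ≤ n.factorization 3 := Nat.Prime.factorization_pos_of_dvd Nat.prime_three hn0 h3
  have hb1 : 1 ≤ n.factorization 5 := Nat.Prime.factorization_pos_of_dvd (by norm_num) hn0 h5
  have ha2 : 2 ≤ n.factorization 3 := arith_evp ha1 (heven 3)
  have hb2 : 2 ≤ n.factorization 5 := arith_evp hb1 (heven 5)
  have h25 : 5^2 ∣ n := (Nat.Prime.pow_dvd_iff_le_factorization (by norm_num) hn0).mpr hb2
  have h9 : 3^2 ∣ n := (Nat.Prime.pow_dvd_iff_le_factorization Nat.prime_three hn0).mpr ha2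
  by_cases ha3 : 3 ≤ n.factorization 3
  · have ha4 : 4 ≤ n.factorization 3 := arith_evp4 ha3 (heven 3)
    have h81 : 3^4 ∣ n := (Nat.Prime.pow_dvd_iff_le_factorization Nat.prime_three hn0).mpr ha4
    have hd : (2025:ℕ) ∣ n := by
      have := Nat.Coprime.mul_dvd_of_dvd_of_dvd (show Nat.Coprime (3^4) (5^2) by norm_num) h81 h25
      norm_num at this; exact this
    have hle := sigma_mono hn hd
    rw [s2025] at hle
    exact (arith_c1 hn hle hsig).elim
  by_cases hb3 : 3 ≤ n.factorization 5
  · have hb4 : 4 ≤ n.factorization 5 := arith_evp4 hb3 (heven 5)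
    have h625 : 5^4 ∣ n := (Nat.Prime.pow_dvd_iff_le_factorization (by norm_num) hn0).mpr hb4
    have hd : (5625:ℕ) ∣ n := by
      have := Nat.Coprime.mul_dvd_of_dvd_of_dvd (show Nat.Coprime (3^2) (5^4) by norm_num) h9 h625
      norm_num at this; exact this
    have hle := sigma_mono hn hd
    rw [s5625] at hle
    exact (arith_c2 hn hle hsig).elim
  -- now exponents are exactly 2
  have h225 : (225:ℕ) ∣ n := by
    have := Nat.Coprime.mul_dvd_of_dvd_of_dvd (show Nat.Coprime (3^2) (5^2) by norm_num) h9 h25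
    norm_num at this; exact this
  set m := n / 225 with hmdef
  have hm : n = 225 * m := by rw [hmdef, mul_comm]; exact (Nat.div_mul_cancel h225).symm
  have hm0 : m ≠ 0 := by intro h0; rw [h0, mul_zero] at hm; exact hn.ne' hm
  have h3m : ¬ 3 ∣ m := by
    rintro ⟨k, hk⟩
    have : 3^3 ∣ n := ⟨25 * k, by rw [hm, hk]; ring⟩
    exact ha3 ((Nat.Prime.pow_dvd_iff_le_factorization Nat.prime_three hn0).mp this)
  have h5m : ¬ 5 ∣ m := by
    rintro ⟨k, hk⟩
    have : 5^3 ∣ n := ⟨9 * k, by rw [hm, hk]; ring⟩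
    exact hb3 ((Nat.Prime.pow_dvd_iff_le_factorization (by norm_num : Nat.Prime 5) hn0).mp this)
  have hcop : Nat.Coprime 225 m := by
    rw [show (225:ℕ) = 3^2 * 5^2 by norm_num]
    exact Nat.Coprime.mul
      (((Nat.Prime.coprime_iff_not_dvd Nat.prime_three).mpr h3m).pow_left 2)
      (((Nat.Prime.coprime_iff_not_dvd (by norm_num)).mpr h5m).pow_left 2)
  have hσ : σ 1 n = 403 * σ 1 m := by
    rw [hm, isMultiplicative_sigma.map_mul_of_coprime hcop, s225]
  have hkey : 403 * σ 1 m = 405 * m := by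
    rw [hσ, hm] at hsig
    exact arith_key hsig
  have h403 : (403:ℕ) ∣ m :=
    Nat.Coprime.dvd_of_dvd_mul_left (show Nat.Coprime 403 405 by norm_num)
      ⟨σ 1 m, hkey.symm⟩
  have h13 : (13:ℕ) ∣ m := dvd_trans (by norm_num) h403
  have hf13 : 1 ≤ m.factorization 13 := Nat.Prime.factorization_pos_of_dvd (by norm_num) hm0 h13
  have heq13 : n.factorization 13 = (225:ℕ).factorization 13 + m.factorization 13 := by
    rw [hm, Nat.factorization_mul (by norm_num) hm0]; simp
  have h225_13 : (225:ℕ).factorization 13 = 0 :=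
    Nat.factorization_eq_zero_of_not_dvd (by norm_num)
  have hf13' : 2 ≤ m.factorization 13 := arith_e13 (heven 13) (h225_13 ▸ heq13) hf13
  have h169 : (169:ℕ) ∣ m := by
    have : 13^2 ∣ m := (Nat.Prime.pow_dvd_iff_le_factorization (by norm_num) hm0).mpr hf13'
    norm_num at this; exact this
  have hle := sigma_mono (Nat.pos_of_ne_zero hm0) h169
  rw [s169] at hle
  exact arith_c3 (Nat.pos_of_ne_zero hm0) hle hkey


private lemma ratio_antitone {c x : ℕ} (hc : 2 ≤ c) (h : c ≤ x) :
    (x:ℚ)/((x:ℚ)-1) ≤ (c:ℚ)/((c:ℚ)-1) := by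
  have hc1 : (1:ℚ) < (c:ℚ) := by exact_mod_cast hc.trans_lt' one_lt_two
  have hx1 : (1:ℚ) < (x:ℚ) := lt_of_lt_of_le hc1 (by exact_mod_cast h)
  have hcx : (c:ℚ) ≤ (x:ℚ) := by exact_mod_cast h
  rw [div_le_div_iff₀ (by linarith) (by linarith)]
  nlinarith

private lemma ratio_nonneg {x : ℕ} (h : 2 ≤ x) : (0:ℚ) ≤ (x:ℚ)/((x:ℚ)-1) := by
  have hx1 : (1:ℚ) < (x:ℚ) := by exact_mod_cast h.trans_lt' one_lt_two
  exact div_nonneg (by linarith) (by linarith)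

private lemma prod_ratio_le (k : ℕ) : ∀ (t : Finset ℕ) (m : ℕ), t.card = k → 2 ≤ m →
    (∀ p ∈ t, m ≤ p) →
    ∏ p ∈ t, ((p:ℚ)/((p:ℚ)-1)) ≤ ((m:ℚ) + (k:ℚ) - 1)/((m:ℚ)-1) := by
  induction k with
  | zero =>
    intro t m hc hm _
    rw [Finset.card_eq_zero.mp hc, Finset.prod_empty]
    have hm1 : (1:ℚ) < (m:ℚ) := by exact_mod_cast hm.trans_lt' one_lt_two
    rw [Nat.cast_zero, add_zero, div_self (by linarith)]
  | succ k ih =>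
    intro t m hc hm hall
    have hne : t.Nonempty := Finset.card_pos.mp (by omega)
    set q := t.min' hne with hqdef
    have hq : q ∈ t := t.min'_mem hne
    have hqm : m ≤ q := hall q hq
    have hrest : ∀ p ∈ t.erase q, m + 1 ≤ p := by
      intro p hp
      have h1 := Finset.min'_le t p (Finset.mem_of_mem_erase hp)
      have h2 := Finset.ne_of_mem_erase hp
      omega
    have hcard : (t.erase q).card = k := by rw [Finset.card_erase_of_mem hq]; omega
    have IH := ih (t.erase q) (m+1) hcard (by omega) hrest
    rw [← Finset.mul_prod_erase t _ hq]
    have hq1 := ratio_antitone hm hqm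
    have hprodnn : (0:ℚ) ≤ ∏ p ∈ t.erase q, ((p:ℚ)/((p:ℚ)-1)) :=
      Finset.prod_nonneg fun p hp => ratio_nonneg (by have := hrest p hp; omega)
    have hm1 : (1:ℚ) < (m:ℚ) := by exact_mod_cast hm.trans_lt' one_lt_two
    have hmn : (0:ℚ) ≤ (m:ℚ)/((m:ℚ)-1) := ratio_nonneg hm
    have step := mul_le_mul hq1 IH hprodnn hmn
    refine step.trans (le_of_eq ?_)
    have hm0 : (m:ℚ) ≠ 0 := by linarith
    push_cast
    rw [div_mul_div_comm]
    rw [show ((m:ℚ)-1)*((m:ℚ)+1-1) = (m:ℚ)*((m:ℚ)-1) by ring]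
    rw [show (m:ℚ)*((m:ℚ)+1+(k:ℚ)-1) = (m:ℚ)*((m:ℚ)+(k:ℚ)+1-1) by ring]
    rw [mul_div_mul_left _ _ hm0]
    ring_nf

private lemma nth_prime_ge (i : ℕ) : i + 2 ≤ Nat.nth Nat.Prime i := by
  induction i with
  | zero => rw [Nat.nth_prime_zero_eq_two]
  | succ i ih =>
    have := (Nat.nth_lt_nth (p := Nat.Prime) Nat.infinite_setOf_prime).mpr (Nat.lt_succ_self i)
    rw [Nat.succ_eq_add_one] at this
    omega

private lemma sigma_ratio_lt {p e : ℕ} (hp : p.Prime) :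
    (0:ℚ) < (σ 1 (p^e) : ℚ) / ((p:ℚ)^e) ∧
    (σ 1 (p^e) : ℚ) / ((p:ℚ)^e) < (p:ℚ)/((p:ℚ)-1) := by
  have hp1 : (1:ℚ) < (p:ℚ) := by exact_mod_cast hp.one_lt
  have hpe : (0:ℚ) < (p:ℚ)^e := by positivity
  have hσ : (σ 1 (p^e) : ℚ) = ∑ i ∈ Finset.range (e+1), (p:ℚ)^i := by
    rw [sigma_one_apply_prime_pow hp]
    push_cast
    rfl
  constructor
  · apply div_pos _ hpe
    rw [hσ]
    exact Finset.sum_pos (fun i _ => by positivity) Finset.nonempty_range_add_one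
  · rw [div_lt_div_iff₀ hpe (by linarith)]
    have hgeo : (∑ i ∈ Finset.range (e+1), (p:ℚ)^i) * ((p:ℚ) - 1) = (p:ℚ)^(e+1) - 1 :=
      geom_sum_mul (p:ℚ) (e+1)
    rw [hσ, hgeo]
    have : (p:ℚ) * (p:ℚ)^e = (p:ℚ)^(e+1) := by ring
    rw [this]
    linarith

theorem third_prime_bound (n : ℕ) (hn : 0 < n) (hodd : Odd n) (hsq : IsSquare n)
    (h5 : 5 ∣ n) (habund : (σ 1 n : ℚ) / n = 9 / 5) (q₃ : ℕ)
    (hq₃ : q₃ ∈ n.primeFactors) (hthird : (n.primeFactors.filter (· < q₃)).card = 2) :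
    q₃ < Nat.nth Nat.Prime ((⌈(180 * (n.primeFactors.card : ℚ)) / 41⌉).toNat - 1) := by
  by_contra hcon
  push_neg at hcon
  have hn0 : n ≠ 0 := hn.ne'
  have hnq : (n:ℚ) ≠ 0 := Nat.cast_ne_zero.mpr hn0
  -- Step A
  have hsig : 5 * σ 1 n = 9 * n := by
    rw [div_eq_div_iff (by positivity) (by norm_num)] at habund
    have : (5:ℚ) * (σ 1 n : ℕ) = 9 * n := by linarith
    exact_mod_cast this
  have h3 : ¬ 3 ∣ n := not_three_dvd hn hsq h5 hsig
  have h2 : ¬ 2 ∣ n := by rw [Nat.odd_iff] at hodd; omega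
  -- step B : 9/5 < prod of p/(p-1)
  have hσprod : (σ 1 n : ℚ) = ∏ p ∈ n.primeFactors, ((σ 1 (p ^ n.factorization p) : ℕ) : ℚ) := by
    have h1 := isMultiplicative_sigma.multiplicative_factorization (σ 1) hn0
    rw [Finsupp.prod] at h1
    rw [h1]
    push_cast
    rfl
  have hnprod : (n:ℚ) = ∏ p ∈ n.primeFactors, ((p:ℚ) ^ n.factorization p) := by
    conv_lhs => rw [← Nat.factorization_prod_pow_eq_self hn0]
    rw [Finsupp.prod]
    push_cast
    rfl
  have hmain : (9:ℚ)/5 = ∏ p ∈ n.primeFactors,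
      ((σ 1 (p ^ n.factorization p) : ℚ) / ((p:ℚ) ^ n.factorization p)) := by
    rw [Finset.prod_div_distrib, ← hσprod, ← hnprod, habund]
  have hlt : (9:ℚ)/5 < ∏ p ∈ n.primeFactors, ((p:ℚ)/((p:ℚ)-1)) := by
    rw [hmain]
    refine Finset.prod_lt_prod_of_nonempty ?_ ?_ ⟨q₃, hq₃⟩
    · intro p hp; exact (sigma_ratio_lt (Nat.prime_of_mem_primeFactors hp)).1
    · intro p hp; exact (sigma_ratio_lt (Nat.prime_of_mem_primeFactors hp)).2
  rw [← Finset.prod_filter_mul_prod_filter_not n.primeFactors (· < q₃)] at hlt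
  -- cards
  have hcards := Finset.card_filter_add_card_filter_not
    (s := n.primeFactors) (p := (· < q₃))
  rw [hthird] at hcards
  have hq3T : q₃ ∈ n.primeFactors.filter (fun p => ¬ p < q₃) :=
    Finset.mem_filter.mpr ⟨hq₃, lt_irrefl q₃⟩
  have hT1 : 1 ≤ (n.primeFactors.filter (fun p => ¬ p < q₃)).card :=
    Finset.card_pos.mpr ⟨q₃, hq3T⟩
  have hω3 : 3 ≤ n.primeFactors.card := by omega
  -- K'
  set K' : ℕ := (⌈(180 * (n.primeFactors.card : ℚ)) / 41⌉).toNat with hK'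
  have hK14 : 14 ≤ K' := by
    have hx : (13:ℚ) < 180 * (n.primeFactors.card : ℚ) / 41 := by
      rw [lt_div_iff₀ (by norm_num)]
      have : (3:ℚ) ≤ (n.primeFactors.card:ℚ) := by exact_mod_cast hω3
      linarith
    have h1 : (13:ℤ) < ⌈180 * (n.primeFactors.card : ℚ) / 41⌉ := Int.lt_ceil.mpr (by push_cast; linarith)
    omega
  have hKq : 180 * ((n.primeFactors.card : ℚ)) / 41 ≤ (K':ℚ) := by
    refine (Int.le_ceil _).trans ?_
    rw [hK']
    exact_mod_cast Int.self_le_toNat ⌈180 * ((n.primeFactors.card : ℚ)) / 41⌉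
  -- M
  set M : ℕ := Nat.nth Nat.Prime (K' - 1) with hM
  have hM2 : K' + 1 ≤ M := by have := nth_prime_ge (K' - 1); omega
  -- T bound
  have hTge : ∀ p ∈ n.primeFactors.filter (fun p => ¬ p < q₃), M ≤ p := by
    intro p hp
    have := (Finset.mem_filter.mp hp).2
    omega
  have hTbound := prod_ratio_le (n.primeFactors.filter (fun p => ¬ p < q₃)).card
    (n.primeFactors.filter (fun p => ¬ p < q₃)) M rfl (by omega) hTge
  have hTnn : (0:ℚ) ≤ ∏ p ∈ n.primeFactors.filter (fun p => ¬ p < q₃), ((p:ℚ)/((p:ℚ)-1)) :=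
    Finset.prod_nonneg fun p hp => ratio_nonneg (by have := hTge p hp; omega)
  -- L bound
  have hLmem : ∀ p ∈ n.primeFactors.filter (· < q₃), 5 ≤ p ∧ p.Prime := by
    intro p hp
    have hpS : p ∈ n.primeFactors := Finset.mem_of_mem_filter p hp
    have hpp := Nat.prime_of_mem_primeFactors hpS
    have hpd := Nat.dvd_of_mem_primeFactors hpS
    have hp2 : p ≠ 2 := by rintro rfl; exact h2 hpd
    have hp3 : p ≠ 3 := by rintro rfl; exact h3 hpd
    have hp4 : p ≠ 4 := by rintro rfl; norm_num at hpp
    exact ⟨by have := hpp.two_le; omega, hpp⟩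
  have hLbound : ∏ p ∈ n.primeFactors.filter (· < q₃), ((p:ℚ)/((p:ℚ)-1)) ≤ 35/24 := by
    obtain ⟨x, y, hxy, hLxy⟩ := Finset.card_eq_two.mp hthird
    have hxm : x ∈ n.primeFactors.filter (· < q₃) := by rw [hLxy]; simp
    have hym : y ∈ n.primeFactors.filter (· < q₃) := by rw [hLxy]; simp
    obtain ⟨hx5, hxp⟩ := hLmem x hxm
    obtain ⟨hy5, hyp⟩ := hLmem y hym
    rw [hLxy, Finset.prod_pair hxy]
    have key : ∀ u v : ℕ, 5 ≤ u → 7 ≤ v →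
        ((u:ℚ)/((u:ℚ)-1)) * ((v:ℚ)/((v:ℚ)-1)) ≤ 35/24 := by
      intro u v hu hv
      have h1 := ratio_antitone (show 2 ≤ 5 by norm_num) hu
      have h2 := ratio_antitone (show 2 ≤ 7 by norm_num) hv
      norm_num at h1 h2
      have := mul_le_mul h1 h2 (ratio_nonneg (by omega)) (by norm_num)
      linarith
    rcases lt_or_gt_of_ne hxy with h | h
    · have hy7 : 7 ≤ y := by
        have h6 : y ≠ 6 := by rintro rfl; norm_num at hyp
        omega
      exact key x y hx5 hy7
    · have hx7 : 7 ≤ x := by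
        have h6 : x ≠ 6 := by rintro rfl; norm_num at hxp
        omega
      rw [mul_comm]
      exact key y x hy5 hx7
  -- combine
  have hcomb := mul_le_mul hLbound hTbound hTnn (by norm_num : (0:ℚ) ≤ 35/24)
  have h1 := lt_of_lt_of_le hlt hcomb
  -- final arithmetic
  set τ : ℚ := ((n.primeFactors.filter (fun p => ¬ p < q₃)).card : ℚ) with hτ
  have hτ1 : (1:ℚ) ≤ τ := by rw [hτ]; exact_mod_cast hT1
  have hκpos : (0:ℚ) < (K':ℚ) := by
    have : (14:ℚ) ≤ (K':ℚ) := by exact_mod_cast hK14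
    linarith
  have hμ : (K':ℚ) + 1 ≤ (M:ℚ) := by exact_mod_cast hM2
  have hμ1 : (1:ℚ) < (M:ℚ) := by linarith
  have h2' : ((M:ℚ) + τ - 1)/((M:ℚ) - 1) ≤ ((K':ℚ) + τ)/(K':ℚ) := by
    rw [div_le_div_iff₀ (by linarith) hκpos]
    nlinarith
  have h3' : (9:ℚ)/5 < 35/24 * (((K':ℚ) + τ)/(K':ℚ)) := by
    calc (9:ℚ)/5 < 35/24 * (((M:ℚ) + τ - 1)/((M:ℚ) - 1)) := h1
      _ ≤ 35/24 * (((K':ℚ) + τ)/(K':ℚ)) := by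
          apply mul_le_mul_of_nonneg_left h2' (by norm_num)
  have h4 : (9:ℚ)/5 * (K':ℚ) < 35/24 * ((K':ℚ) + τ) := by
    have := mul_lt_mul_of_pos_right h3' hκpos
    rwa [mul_assoc, div_mul_cancel₀ _ (ne_of_gt hκpos)] at this
  have hcards' : (n.primeFactors.card : ℚ) = 2 + τ := by
    rw [hτ]
    exact_mod_cast hcards.symm
  rw [hcards'] at hKq
  rw [div_le_iff₀ (by norm_num)] at hKq
  linarith
end

section
/- Let k ≥ 2 and let q be a prime with q ≥ p_{⌈7k/3⌉}, where p_j denotes the j-th prime. Then (5/4) · ∏_{i=0}^{k-2} p_{⌈7k/3⌉+i}/(p_{⌈7k/3⌉+i} - 1) < 25/14. -/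
lemma nth_prime_zero_eq : Nat.nth Nat.Prime 0 = 2 := by
  have h : Nat.count Nat.Prime 2 = 0 := by
    simp only [Nat.count_succ, Nat.count_zero]
    norm_num
  have := Nat.nth_count Nat.prime_two
  rwa [h] at this

lemma nth_prime_ge_aux (j : ℕ) : j + 2 ≤ Nat.nth Nat.Prime j := by
  induction j with
  | zero => simp [nth_prime_zero_eq]
  | succ n ih =>
    have h : Nat.nth Nat.Prime n < Nat.nth Nat.Prime (n + 1) :=
      (Nat.nth_lt_nth Nat.infinite_setOf_prime).2 (Nat.lt_succ_self n)
    omega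

theorem prod_ratio_bound (k : ℕ) (hk : 2 ≤ k) (q : ℕ) (hq : q.Prime)
    (hqge : Nat.nth Nat.Prime ((⌈(7 * k : ℚ) / 3⌉).toNat - 1) ≤ q) :
    (5 / 4 : ℝ) * ∏ i ∈ Finset.range (k - 1),
        (Nat.nth Nat.Prime ((⌈(7 * k : ℚ) / 3⌉).toNat - 1 + i) : ℝ) /
          ((Nat.nth Nat.Prime ((⌈(7 * k : ℚ) / 3⌉).toNat - 1 + i) : ℝ) - 1) <
      25 / 14 := by
  set m := (⌈(7 * k : ℚ) / 3⌉).toNat - 1 with hm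
  -- telescoping bound on the product
  have key : ∀ n : ℕ, ∏ i ∈ Finset.range n,
      (Nat.nth Nat.Prime (m + i) : ℝ) / ((Nat.nth Nat.Prime (m + i) : ℝ) - 1)
      ≤ ((m : ℝ) + n + 1) / ((m : ℝ) + 1) := by
    intro n
    induction n with
    | zero =>
      simp only [Finset.range_zero, Finset.prod_empty, Nat.cast_zero, add_zero]
      rw [div_self (by positivity)]
    | succ n ih =>
      rw [Finset.prod_range_succ]
      have hp : (m + n + 2 : ℕ) ≤ Nat.nth Nat.Prime (m + n) := by
        have := nth_prime_ge_aux (m + n); omega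
      have hp' : ((m : ℝ) + n + 2) ≤ (Nat.nth Nat.Prime (m + n) : ℝ) := by
        exact_mod_cast hp
      have h1 : (0 : ℝ) < (Nat.nth Nat.Prime (m + n) : ℝ) - 1 := by linarith
      have hterm : (Nat.nth Nat.Prime (m + n) : ℝ) / ((Nat.nth Nat.Prime (m + n) : ℝ) - 1)
          ≤ ((m : ℝ) + n + 2) / ((m : ℝ) + n + 1) := by
        rw [div_le_div_iff₀ h1 (by positivity)]
        nlinarith
      have hnn2 : (0 : ℝ) ≤ (Nat.nth Nat.Prime (m + n) : ℝ) /
          ((Nat.nth Nat.Prime (m + n) : ℝ) - 1) :=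
        div_nonneg (Nat.cast_nonneg _) (le_of_lt h1)
      calc (∏ i ∈ Finset.range n,
            (Nat.nth Nat.Prime (m + i) : ℝ) / ((Nat.nth Nat.Prime (m + i) : ℝ) - 1)) *
            ((Nat.nth Nat.Prime (m + n) : ℝ) / ((Nat.nth Nat.Prime (m + n) : ℝ) - 1))
          ≤ (((m : ℝ) + n + 1) / ((m : ℝ) + 1)) * (((m : ℝ) + n + 2) / ((m : ℝ) + n + 1)) :=
            mul_le_mul ih hterm hnn2 (by positivity)
        _ = ((m : ℝ) + n + 2) / ((m : ℝ) + 1) := by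
            field_simp
        _ = ((m : ℝ) + (n + 1 : ℕ) + 1) / ((m : ℝ) + 1) := by push_cast; ring
  -- arithmetic: 7k ≤ 3(m+1)
  have hceil : (7 * k : ℚ) ≤ 3 * (⌈(7 * k : ℚ) / 3⌉ : ℚ) := by
    have := Int.le_ceil ((7 * k : ℚ) / 3); linarith
  have hnn : (0 : ℤ) ≤ ⌈(7 * k : ℚ) / 3⌉ := Int.ceil_nonneg (by positivity)
  have hcast2 : (((⌈(7 * k : ℚ) / 3⌉).toNat : ℕ) : ℚ) = ((⌈(7 * k : ℚ) / 3⌉ : ℤ) : ℚ) := by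
    exact_mod_cast Int.toNat_of_nonneg hnn
  have h7k : 7 * k ≤ 3 * (⌈(7 * k : ℚ) / 3⌉).toNat := by
    rw [← Nat.cast_le (α := ℚ)]
    push_cast
    push_cast at hcast2
    rw [hcast2]
    linarith
  have hm1 : m + 1 = (⌈(7 * k : ℚ) / 3⌉).toNat := by omega
  have h7k' : 7 * k ≤ 3 * (m + 1) := by omega
  have h7kR : (7 : ℝ) * k ≤ 3 * ((m : ℝ) + 1) := by exact_mod_cast h7k'
  have hkey := key (k - 1)
  have hcast : ((k - 1 : ℕ) : ℝ) = (k : ℝ) - 1 := by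
    have h1k : 1 ≤ k := by omega
    push_cast [Nat.cast_sub h1k]
    ring
  rw [hcast] at hkey
  have hlt : ((m : ℝ) + ((k : ℝ) - 1) + 1) / ((m : ℝ) + 1) < 10 / 7 := by
    rw [div_lt_iff₀ (by positivity)]
    have hmn : (0 : ℝ) ≤ (m : ℝ) := Nat.cast_nonneg m
    nlinarith
  have hPnn : (0 : ℝ) ≤ ∏ i ∈ Finset.range (k - 1),
      (Nat.nth Nat.Prime (m + i) : ℝ) / ((Nat.nth Nat.Prime (m + i) : ℝ) - 1) := by
    apply Finset.prod_nonneg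
    intro i _
    have hp : (m + i + 2 : ℕ) ≤ Nat.nth Nat.Prime (m + i) := by
      have := nth_prime_ge_aux (m + i); omega
    have hp' : ((m : ℝ) + i + 2) ≤ (Nat.nth Nat.Prime (m + i) : ℝ) := by exact_mod_cast hp
    exact div_nonneg (Nat.cast_nonneg _) (by linarith)
  linarith
end
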